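/- arXiv:2206.09016 — 2 statements merged into one kernel-verified Lean document; each statement's English description precedes it below -/
import Mathlib

section
/- Let d ∈ ℕ. Let f : ℝ^d × ℝ → ℝ^d be continuously differentiable and twice continuously differentiable in its first (space) argument, and let u : ℝ × ℝ^d → ℝ be twice continuously differentiable. Suppose u satisfies the transport (continuity) equation ∂_t u(t,x) = -⟨∇_x u(t,x), f(x,t)⟩ - tr(D_x f(x,t)) for all (t,x) ∈ ℝ × ℝ^d, where D_x f denotes the Jacobian matrix of f in x and tr its trace. Let z : ℝ → ℝ^d be differentiable with z'(t) = f(z(t), t) for all t. Then the curve t ↦ ∇_x u(t, z(t)) is differentiable, and for all t it satisfies d/dt [∇_x u(t, z(t))] = -(D_x f(z(t), t))ᵀ ∇_x u(t, z(t)) - ∇_x [x ↦ tr(D_x f(x, t))](z(t)). -/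
open MeasureTheory

section Aux

set_option linter.unnecessarySimpa false

open InnerProductSpace ContinuousLinearMap

variable {E : Type*} [NormedAddCommGroup E] [InnerProductSpace ℝ E] [FiniteDimensional ℝ E]

/-- The inverse of `toDual` as a continuous `ℝ`-linear map (over `ℝ` it is genuinely linear). -/
noncomputable def dualInv (E : Type*) [NormedAddCommGroup E] [InnerProductSpace ℝ E]
    [FiniteDimensional ℝ E] : StrongDual ℝ E →L[ℝ] E :=
  LinearMap.toContinuousLinearMap
    { toFun := fun L => (InnerProductSpace.toDual ℝ E).symm L
      map_add' := fun a b => map_add _ a b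
      map_smul' := fun r a => by
        have h := (InnerProductSpace.toDual ℝ E).symm.map_smulₛₗ r a
        simp only [starRingEnd_apply, star_trivial] at h
        exact h }

@[simp] lemma dualInv_apply (E : Type*) [NormedAddCommGroup E] [InnerProductSpace ℝ E]
    [FiniteDimensional ℝ E] (L : StrongDual ℝ E) :
    dualInv E L = (InnerProductSpace.toDual ℝ E).symm L := rfl

theorem path_gradient_ode_aux
    (f : E → ℝ → E) (u : ℝ → E → ℝ)
    (hf_space : ∀ t : ℝ, ContDiff ℝ 2 (fun x => f x t))
    (hu : ContDiff ℝ 2 (fun p : ℝ × E => u p.1 p.2))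
    (transport : ∀ (t : ℝ) (x : E),
        deriv (fun s => u s x) t
          = - inner ℝ (gradient (fun y => u t y) x) (f x t)
            - LinearMap.trace ℝ E (fderiv ℝ (fun y => f y t) x : E →ₗ[ℝ] E))
    (z : ℝ → E) (hz : ∀ t : ℝ, HasDerivAt z (f (z t) t) t) (t : ℝ) :
    HasDerivAt (fun s => gradient (fun y => u s y) (z s))
        (- (ContinuousLinearMap.adjoint (fderiv ℝ (fun y => f y t) (z t)))
              (gradient (fun y => u t y) (z t))
          - gradient (fun x => LinearMap.trace ℝ E
              (fderiv ℝ (fun y => f y t) x : E →ₗ[ℝ] E)) (z t)) t := by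
  classical
  have hU1 : Differentiable ℝ (fun p : ℝ × E => u p.1 p.2) := hu.differentiable (by norm_num)
  have hU' : ContDiff ℝ 1 (fderiv ℝ (fun p : ℝ × E => u p.1 p.2)) :=
    hu.fderiv_right (by norm_num)
  have hU'diff : Differentiable ℝ (fderiv ℝ (fun p : ℝ × E => u p.1 p.2)) :=
    hU'.differentiable one_ne_zero
  -- i1 : spatial fderiv of u s
  have i1 : ∀ (s : ℝ) (x : E), fderiv ℝ (fun y => u s y) x
      = (fderiv ℝ (fun p : ℝ × E => u p.1 p.2) (s, x)).comp (inr ℝ ℝ E) := fun s x =>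
    (((hU1 (s, x)).hasFDerivAt).comp x (hasFDerivAt_prodMk_right s x)).fderiv
  have i2 : ∀ (s : ℝ) (x : E), gradient (fun y => u s y) x
      = (toDual ℝ E).symm ((fderiv ℝ (fun p : ℝ × E => u p.1 p.2) (s, x)).comp (inr ℝ ℝ E)) := by
    intro s x
    rw [show gradient (fun y => u s y) x
      = (toDual ℝ E).symm (fderiv ℝ (fun y => u s y) x) from rfl, i1]
  have ginner : ∀ (g : E → ℝ) (x v : E), (inner ℝ (gradient g x) v : ℝ) = fderiv ℝ g x v :=
    fun g x v => toDual_symm_apply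
  -- Φ := fun p => P (fderiv U p)
  have hΦ : ContDiff ℝ 1 (fun p : ℝ × E =>
      ((compL ℝ E (ℝ × E) ℝ).flip (inr ℝ ℝ E)) (fderiv ℝ (fun p : ℝ × E => u p.1 p.2) p)) :=
    ((compL ℝ E (ℝ × E) ℝ).flip (inr ℝ ℝ E)).contDiff.comp hU'
  have hγ : HasDerivAt (fun s => ((s : ℝ), z s)) ((1 : ℝ), f (z t) t) t :=
    (hasDerivAt_id t).prodMk (hz t)
  have hΦz : HasDerivAt
      (fun s => ((compL ℝ E (ℝ × E) ℝ).flip (inr ℝ ℝ E))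
        (fderiv ℝ (fun p : ℝ × E => u p.1 p.2) (s, z s)))
      (fderiv ℝ (fun p : ℝ × E =>
          ((compL ℝ E (ℝ × E) ℝ).flip (inr ℝ ℝ E)) (fderiv ℝ (fun p : ℝ × E => u p.1 p.2) p))
        (t, z t) ((1 : ℝ), f (z t) t)) t :=
    by have h := ((hΦ.differentiable one_ne_zero (t, z t)).hasFDerivAt).comp_hasDerivAt t hγ; exact h
  have hfd2 : HasFDerivAt (fderiv ℝ (fun p : ℝ × E => u p.1 p.2))
      (fderiv ℝ (fderiv ℝ (fun p : ℝ × E => u p.1 p.2)) (t, z t)) (t, z t) :=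
    (hU'diff (t, z t)).hasFDerivAt
  have hΦfd : fderiv ℝ (fun p : ℝ × E =>
      ((compL ℝ E (ℝ × E) ℝ).flip (inr ℝ ℝ E)) (fderiv ℝ (fun p : ℝ × E => u p.1 p.2) p)) (t, z t)
      = ((compL ℝ E (ℝ × E) ℝ).flip (inr ℝ ℝ E)).comp
          (fderiv ℝ (fderiv ℝ (fun p : ℝ × E => u p.1 p.2)) (t, z t)) :=
    (((compL ℝ E (ℝ × E) ℝ).flip (inr ℝ ℝ E)).hasFDerivAt.comp (t, z t) hfd2).fderiv
  have hsymm : ∀ a b : ℝ × E,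
      fderiv ℝ (fderiv ℝ (fun p : ℝ × E => u p.1 p.2)) (t, z t) a b
      = fderiv ℝ (fderiv ℝ (fun p : ℝ × E => u p.1 p.2)) (t, z t) b a :=
    second_derivative_symmetric (fun y => (hU1 y).hasFDerivAt) hfd2
  -- q p := fderiv U p (1, f₀)
  have hq : HasFDerivAt (fun p : ℝ × E =>
        fderiv ℝ (fun p : ℝ × E => u p.1 p.2) p ((1 : ℝ), f (z t) t))
      ((ContinuousLinearMap.apply ℝ ℝ ((1 : ℝ), f (z t) t)).comp
        (fderiv ℝ (fderiv ℝ (fun p : ℝ × E => u p.1 p.2)) (t, z t))) (t, z t) :=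
    (ContinuousLinearMap.apply ℝ ℝ ((1 : ℝ), f (z t) t)).hasFDerivAt.comp (t, z t) hfd2
  -- pointwise value of q via transport
  have hqval : ∀ (s : ℝ) (x : E),
      fderiv ℝ (fun p : ℝ × E => u p.1 p.2) (s, x) ((1 : ℝ), f (z t) t)
      = (inner ℝ (gradient (fun y => u s y) x) (f (z t) t) : ℝ)
        - (inner ℝ (gradient (fun y => u s y) x) (f x s) : ℝ)
        - LinearMap.trace ℝ E (fderiv ℝ (fun y => f y s) x : E →ₗ[ℝ] E) := by
    intro s x
    have hsplit : ((1 : ℝ), f (z t) t) = ((1 : ℝ), (0 : E)) + ((0 : ℝ), f (z t) t) := by simp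
    have h1 : fderiv ℝ (fun p : ℝ × E => u p.1 p.2) (s, x) ((1 : ℝ), (0 : E))
        = deriv (fun r => u r x) s := by
      have hc : HasDerivAt (fun r => u r x)
          (fderiv ℝ (fun p : ℝ × E => u p.1 p.2) (s, x) ((1 : ℝ), (0 : E))) s :=
        by have h := (hU1 (s, x)).hasFDerivAt.comp_hasDerivAt s
             ((hasDerivAt_id s).prodMk (hasDerivAt_const s x)); exact h
      exact hc.deriv.symm
    have h2 : fderiv ℝ (fun p : ℝ × E => u p.1 p.2) (s, x) ((0 : ℝ), f (z t) t)
        = (inner ℝ (gradient (fun y => u s y) x) (f (z t) t) : ℝ) := by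
      rw [ginner, i1]; rfl
    rw [hsplit, map_add, h1, h2, transport s x]
    ring
  -- spatial derivative of q at (t, z t)
  have hqspace : HasFDerivAt (fun x : E =>
        fderiv ℝ (fun p : ℝ × E => u p.1 p.2) (t, x) ((1 : ℝ), f (z t) t))
      (((ContinuousLinearMap.apply ℝ ℝ ((1 : ℝ), f (z t) t)).comp
          (fderiv ℝ (fderiv ℝ (fun p : ℝ × E => u p.1 p.2)) (t, z t))).comp (inr ℝ ℝ E))
      (z t) :=
    hq.comp (z t) (hasFDerivAt_prodMk_right t (z t))
  -- g₂ := x ↦ f (z t) t - f x t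
  have hDf : HasFDerivAt (fun x => f x t) (fderiv ℝ (fun y => f y t) (z t)) (z t) :=
    ((hf_space t).differentiable (by norm_num) (z t)).hasFDerivAt
  have hg2 : HasFDerivAt (fun x => f (z t) t - f x t)
      (-(fderiv ℝ (fun y => f y t) (z t))) (z t) := hDf.const_sub _
  -- g₁ := gradient of u t
  have hΦx : HasFDerivAt (fun x : E =>
        ((compL ℝ E (ℝ × E) ℝ).flip (inr ℝ ℝ E)) (fderiv ℝ (fun p : ℝ × E => u p.1 p.2) (t, x)))
      ((fderiv ℝ (fun p : ℝ × E =>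
          ((compL ℝ E (ℝ × E) ℝ).flip (inr ℝ ℝ E)) (fderiv ℝ (fun p : ℝ × E => u p.1 p.2) p))
        (t, z t)).comp (inr ℝ ℝ E)) (z t) :=
    ((hΦ.differentiable one_ne_zero (t, z t)).hasFDerivAt).comp (z t)
      (hasFDerivAt_prodMk_right t (z t))
  have hg1 : HasFDerivAt (fun x => gradient (fun y => u t y) x)
      ((dualInv E).comp
        ((fderiv ℝ (fun p : ℝ × E =>
            ((compL ℝ E (ℝ × E) ℝ).flip (inr ℝ ℝ E)) (fderiv ℝ (fun p : ℝ × E => u p.1 p.2) p))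
          (t, z t)).comp (inr ℝ ℝ E))) (z t) := by
    have h := (dualInv E).hasFDerivAt.comp (z t) hΦx
    exact h.congr_of_eventuallyEq (Filter.Eventually.of_forall fun x => by
      show gradient (fun y => u t y) x = _
      rw [i2 t x]; rfl)
  -- differentiability of the trace of the Jacobian
  have hft' : ContDiff ℝ 1 (fderiv ℝ (fun y => f y t)) := (hf_space t).fderiv_right (by norm_num)
  have hTd : HasFDerivAt
      (fun x => LinearMap.trace ℝ E (fderiv ℝ (fun y => f y t) x : E →ₗ[ℝ] E))
      ((LinearMap.toContinuousLinearMap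
          ((LinearMap.trace ℝ E).comp (ContinuousLinearMap.coeLM ℝ))).comp
        (fderiv ℝ (fderiv ℝ (fun y => f y t)) (z t))) (z t) :=
    (LinearMap.toContinuousLinearMap
        ((LinearMap.trace ℝ E).comp (ContinuousLinearMap.coeLM ℝ))).hasFDerivAt.comp (z t)
      ((hft'.differentiable one_ne_zero (z t)).hasFDerivAt)
  have hT : HasFDerivAt
      (fun x => LinearMap.trace ℝ E (fderiv ℝ (fun y => f y t) x : E →ₗ[ℝ] E))
      (fderiv ℝ (fun x => LinearMap.trace ℝ E
        (fderiv ℝ (fun y => f y t) x : E →ₗ[ℝ] E)) (z t)) (z t) :=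
    hTd.differentiableAt.hasFDerivAt
  -- the right-hand side derivative
  have hRHS := (hg1.inner ℝ hg2).sub hT
  -- the two functions agree
  have hfuneq : (fun x : E =>
        fderiv ℝ (fun p : ℝ × E => u p.1 p.2) (t, x) ((1 : ℝ), f (z t) t))
      = fun x : E => (inner ℝ (gradient (fun y => u t y) x) (f (z t) t - f x t) : ℝ)
          - LinearMap.trace ℝ E (fderiv ℝ (fun y => f y t) x : E →ₗ[ℝ] E) := by
    funext x
    rw [hqval t x, inner_sub_right]
  rw [hfuneq] at hqspace
  have huniq := hqspace.unique hRHS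
  -- final assembly
  have hfinal := (dualInv E).hasFDerivAt.comp_hasDerivAt t hΦz
  have hfinal' : HasDerivAt (fun s => gradient (fun y => u s y) (z s))
      (dualInv E
        ((fderiv ℝ (fun p : ℝ × E =>
            ((compL ℝ E (ℝ × E) ℝ).flip (inr ℝ ℝ E)) (fderiv ℝ (fun p : ℝ × E => u p.1 p.2) p))
          (t, z t)) ((1 : ℝ), f (z t) t))) t :=
    hfinal.congr_of_eventuallyEq (Filter.Eventually.of_forall fun s => by
      show gradient (fun y => u s y) (z s) = _
      rw [i2 s (z s)]; rfl)
  convert hfinal' using 1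
  -- it remains to identify the derivative vector
  refine (ext_inner_right ℝ fun w => ?_).symm
  have lhs1 : (inner ℝ (dualInv E
      ((fderiv ℝ (fun p : ℝ × E =>
          ((compL ℝ E (ℝ × E) ℝ).flip (inr ℝ ℝ E)) (fderiv ℝ (fun p : ℝ × E => u p.1 p.2) p))
        (t, z t)) ((1 : ℝ), f (z t) t))) w : ℝ)
      = (fderiv ℝ (fun p : ℝ × E =>
          ((compL ℝ E (ℝ × E) ℝ).flip (inr ℝ ℝ E)) (fderiv ℝ (fun p : ℝ × E => u p.1 p.2) p))
        (t, z t)) ((1 : ℝ), f (z t) t) w := by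
    rw [dualInv_apply]; exact toDual_symm_apply
  rw [lhs1, hΦfd]
  have l2 : (((compL ℝ E (ℝ × E) ℝ).flip (inr ℝ ℝ E)).comp
        (fderiv ℝ (fderiv ℝ (fun p : ℝ × E => u p.1 p.2)) (t, z t)))
        ((1 : ℝ), f (z t) t) w
      = (fderiv ℝ (fderiv ℝ (fun p : ℝ × E => u p.1 p.2)) (t, z t))
          ((1 : ℝ), f (z t) t) ((0 : ℝ), w) := rfl
  rw [l2, hsymm ((1 : ℝ), f (z t) t) ((0 : ℝ), w)]
  have l3 : (fderiv ℝ (fderiv ℝ (fun p : ℝ × E => u p.1 p.2)) (t, z t))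
        ((0 : ℝ), w) ((1 : ℝ), f (z t) t)
      = (((ContinuousLinearMap.apply ℝ ℝ ((1 : ℝ), f (z t) t)).comp
          (fderiv ℝ (fderiv ℝ (fun p : ℝ × E => u p.1 p.2)) (t, z t))).comp (inr ℝ ℝ E)) w := rfl
  rw [l3, huniq]
  simp only [ContinuousLinearMap.sub_apply, ContinuousLinearMap.comp_apply,
    ContinuousLinearMap.prod_apply, fderivInnerCLM_apply, ContinuousLinearMap.neg_apply,
    sub_self, inner_zero_right, inner_neg_right, add_zero, inner_sub_left, inner_neg_left,
    ContinuousLinearMap.adjoint_inner_left, ginner, map_neg]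

end Aux

/-- **Theorem 1 of the paper.**
Let `f : ℝ^d × ℝ → ℝ^d` be continuously differentiable, and twice continuously
differentiable in its first (space) argument, and let `u : ℝ × ℝ^d → ℝ` be twice
continuously differentiable.  Suppose `u` satisfies the transport (continuity) equation
`∂ₜ u(t,x) = -⟪∇ₓ u(t,x), f(x,t)⟫ - tr (Dₓ f(x,t))`.
If `z : ℝ → ℝ^d` solves `z'(t) = f(z(t), t)`, then `t ↦ ∇ₓ u(t, z(t))` is differentiable,
with derivative `-(Dₓ f(z(t),t))ᵀ ∇ₓ u(t,z(t)) - ∇ₓ [x ↦ tr (Dₓ f(x,t))](z(t))`. -/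
theorem path_gradient_ode
    (d : ℕ)
    (f : EuclideanSpace ℝ (Fin d) → ℝ → EuclideanSpace ℝ (Fin d))
    (u : ℝ → EuclideanSpace ℝ (Fin d) → ℝ)
    (hf : ContDiff ℝ 1 (fun p : EuclideanSpace ℝ (Fin d) × ℝ => f p.1 p.2))
    (hf_space : ∀ t : ℝ, ContDiff ℝ 2 (fun x => f x t))
    (hu : ContDiff ℝ 2 (fun p : ℝ × EuclideanSpace ℝ (Fin d) => u p.1 p.2))
    (transport :
      ∀ (t : ℝ) (x : EuclideanSpace ℝ (Fin d)),
        deriv (fun s => u s x) t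
          = - inner ℝ (gradient (fun y => u t y) x) (f x t)
            - LinearMap.trace ℝ (EuclideanSpace ℝ (Fin d))
                (fderiv ℝ (fun y => f y t) x : EuclideanSpace ℝ (Fin d) →ₗ[ℝ] EuclideanSpace ℝ (Fin d)))
    (z : ℝ → EuclideanSpace ℝ (Fin d))
    (hz : ∀ t : ℝ, HasDerivAt z (f (z t) t) t) :
    ∀ t : ℝ,
      HasDerivAt (fun s => gradient (fun y => u s y) (z s))
        (- (ContinuousLinearMap.adjoint (fderiv ℝ (fun y => f y t) (z t)))
              (gradient (fun y => u t y) (z t))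
          - gradient
              (fun x =>
                LinearMap.trace ℝ (EuclideanSpace ℝ (Fin d))
                  (fderiv ℝ (fun y => f y t) x : EuclideanSpace ℝ (Fin d) →ₗ[ℝ] EuclideanSpace ℝ (Fin d)))
              (z t))
        t := by
  exact fun t => path_gradient_ode_aux f u hf_space hu transport z hz t
end

section
/- Let p, d, N ∈ ℕ with N ≥ 1 and θ* ∈ ℝ^p. Let q_Z be a probability measure on ℝ^d, g : ℝ^p × ℝ^d → ℝ^d differentiable in its first argument, and let q : ℝ^d → (0,∞) be a differentiable probability density (with respect to Lebesgue measure) equal to the density of the pushforward of q_Z under g(θ*, ·). Let P : ℝ^d → (0,∞) be differentiable with q(x) = P(x) for all x ∈ ℝ^d. Let s : ℝ^d → ℝ^p be measurable (the score x ↦ ∇_θ log q_θ(x)|_{θ*}) with ∫ s(x) q(x) dx = 0 and ∫ ‖s(x)‖² q(x) dx < ∞, and let I ∈ ℝ^{p×p} be the Fisher information matrix I_{ij} = ∫ s(x)_i s(x)_j q(x) dx. For i.i.d. z^{(1)}, …, z^{(N)} with law q_Z define G_path := (1/N) Σ_{l} (D_θ g(θ, z^{(l)})|_{θ*})ᵀ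 ∇_x [log q − log P](g(θ*, z^{(l)})), G_score := (1/N) Σ_{l} s(g(θ*, z^{(l)})), and G_total := G_path + G_score. Then G_total = G_score almost surely, E[G_total] = 0, and the covariance matrix of G_total equals (1/N) · I; in particular, if I ≠ 0 the total-gradient estimator has non-vanishing covariance at the perfectly matched parameter θ*. -/
open MeasureTheory ProbabilityTheory
open scoped NNReal ENNReal

/-- At a perfectly matched variational parameter `θ*` (where the variational density `q`
equals the target density `P`), the path-gradient part of the total-gradient estimator
vanishes, so `G_total = G_score` almost surely; hence `G_total` has zero mean and its
covariance equals `(1/N) · I`, the Fisher information divided by the sample size — in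
particular it is non-vanishing whenever `I ≠ 0`. -/
theorem total_gradient_covariance_at_optimum
    (p d N : ℕ) (hN : 1 ≤ N)
    (θstar : EuclideanSpace ℝ (Fin p))
    {Ω : Type*} [MeasurableSpace Ω] (μ : Measure Ω) [IsProbabilityMeasure μ]
    (qZ : Measure (EuclideanSpace ℝ (Fin d))) [IsProbabilityMeasure qZ]
    (g : EuclideanSpace ℝ (Fin p) → EuclideanSpace ℝ (Fin d) → EuclideanSpace ℝ (Fin d))
    (hg_diff : ∀ z, Differentiable ℝ (fun θ => g θ z))
    (hg_meas : Measurable (g θstar))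
    (q : EuclideanSpace ℝ (Fin d) → ℝ) (hq_pos : ∀ x, 0 < q x)
    (hq_diff : Differentiable ℝ q)
    (hq_density :
      Measure.map (g θstar) qZ
        = (volume : Measure (EuclideanSpace ℝ (Fin d))).withDensity
            (fun x => ENNReal.ofReal (q x)))
    (P : EuclideanSpace ℝ (Fin d) → ℝ) (hP_pos : ∀ x, 0 < P x)
    (hP_diff : Differentiable ℝ P)
    (heq : ∀ x, q x = P x)
    (s : EuclideanSpace ℝ (Fin d) → EuclideanSpace ℝ (Fin p)) (hs : Measurable s)
    (hs_mean : ∫ x, q x • s x ∂(volume : Measure (EuclideanSpace ℝ (Fin d))) = 0)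
    (hs_sq : Integrable (fun x => q x * ‖s x‖ ^ 2)
      (volume : Measure (EuclideanSpace ℝ (Fin d))))
    (I : Matrix (Fin p) (Fin p) ℝ)
    (hI : ∀ i j, I i j
      = ∫ x, s x i * s x j * q x ∂(volume : Measure (EuclideanSpace ℝ (Fin d))))
    (z : Fin N → Ω → EuclideanSpace ℝ (Fin d))
    (hz_meas : ∀ l, Measurable (z l))
    (hz_indep : iIndepFun z μ)
    (hz_law : ∀ l, Measure.map (z l) μ = qZ)
    (Gpath Gscore Gtotal : Ω → EuclideanSpace ℝ (Fin p))
    (hGpath : ∀ ω, Gpath ω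
      = (N : ℝ)⁻¹ • ∑ l : Fin N,
          (ContinuousLinearMap.adjoint (fderiv ℝ (fun θ => g θ (z l ω)) θstar))
            (gradient (fun y => Real.log (q y) - Real.log (P y)) (g θstar (z l ω))))
    (hGscore : ∀ ω, Gscore ω = (N : ℝ)⁻¹ • ∑ l : Fin N, s (g θstar (z l ω)))
    (hGtotal : ∀ ω, Gtotal ω = Gpath ω + Gscore ω) :
    (∀ᵐ ω ∂μ, Gtotal ω = Gscore ω) ∧
    (∫ ω, Gtotal ω ∂μ = 0) ∧
    (∀ i j, ∫ ω, (Gtotal ω i - (∫ ω', Gtotal ω' i ∂μ)) * (Gtotal ω j - (∫ ω', Gtotal ω' j ∂μ)) ∂μ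
        = (N : ℝ)⁻¹ * I i j) ∧
    (I ≠ 0 →
      ¬ (∀ i j, ∫ ω, (Gtotal ω i - (∫ ω', Gtotal ω' i ∂μ)) *
            (Gtotal ω j - (∫ ω', Gtotal ω' j ∂μ)) ∂μ = 0)) := by
  classical
  have hN0 : (N : ℝ) ≠ 0 := by positivity
  -- the density as an ℝ≥0-valued function
  have hq_meas : Measurable q := hq_diff.continuous.measurable
  set f : EuclideanSpace ℝ (Fin d) → ℝ≥0 := fun x => (q x).toNNReal with hf_def
  have hf_meas : Measurable f := hq_meas.real_toNNReal
  have hfq : ∀ x, (f x : ℝ) = q x := fun x => Real.coe_toNNReal _ (hq_pos x).le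
  have hν_eq : (volume : Measure (EuclideanSpace ℝ (Fin d))).withDensity
      (fun x => ENNReal.ofReal (q x))
      = (volume : Measure (EuclideanSpace ℝ (Fin d))).withDensity
          (fun x => ((f x : ℝ≥0∞))) := by
    congr 1
  set ν : Measure (EuclideanSpace ℝ (Fin d)) :=
    (volume : Measure (EuclideanSpace ℝ (Fin d))).withDensity (fun x => ((f x : ℝ≥0∞))) with hν_def
  have hν_prob : IsProbabilityMeasure ν := by
    rw [← hν_eq, ← hq_density]
    exact Measure.isProbabilityMeasure_map hg_meas.aemeasurable
  -- path gradient vanishes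
  have hlog : (fun y => Real.log (q y) - Real.log (P y)) = fun _ => (0 : ℝ) := by
    funext y; rw [heq y, sub_self]
  have hGpath0 : ∀ ω, Gpath ω = 0 := by
    intro ω
    rw [hGpath ω, hlog]
    simp [gradient_const]
  have hGT : ∀ ω, Gtotal ω = Gscore ω := fun ω => by
    rw [hGtotal ω, hGpath0 ω, zero_add]
  -- the samples
  set X : Fin N → Ω → EuclideanSpace ℝ (Fin p) := fun l ω => s (g θstar (z l ω)) with hX_def
  have hgz_meas : ∀ l, Measurable (fun ω => g θstar (z l ω)) :=
    fun l => hg_meas.comp (hz_meas l)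
  have hmap : ∀ l, Measure.map (fun ω => g θstar (z l ω)) μ = ν := by
    intro l
    rw [show (fun ω => g θstar (z l ω)) = (g θstar) ∘ (z l) from rfl,
      ← Measure.map_map hg_meas (hz_meas l), hz_law l, hq_density, hν_eq]
  -- L² membership
  have hsq_ν : Integrable (fun x => ‖s x‖ ^ 2) ν := by
    rw [hν_def, integrable_withDensity_iff hf_meas.coe_nnreal_ennreal
      (Filter.Eventually.of_forall fun x => ENNReal.coe_lt_top)]
    have : (fun x => ‖s x‖ ^ 2 * ((f x : ℝ≥0∞)).toReal)
        = fun x => q x * ‖s x‖ ^ 2 := by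
      funext x; simp [hfq x]; ring
    rw [this]; exact hs_sq
  have hsν2 : MemLp s 2 ν :=
    (memLp_two_iff_integrable_sq_norm hs.aestronglyMeasurable).2 hsq_ν
  have hX2 : ∀ l, MemLp (X l) 2 μ := by
    intro l
    have h := hsν2
    rw [← hmap l] at h
    exact (memLp_map_measure_iff h.aestronglyMeasurable
      (hgz_meas l).aemeasurable).1 h
  have hXint : ∀ l, Integrable (X l) μ := fun l => (hX2 l).integrable one_le_two
  -- component measurability / L²
  have hsi_meas : ∀ i : Fin p, Measurable (fun x => s x i) := fun i =>
    ((EuclideanSpace.proj (𝕜 := ℝ) i).continuous.measurable).comp hs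
  have hXi2 : ∀ l (i : Fin p), MemLp (fun ω => X l ω i) 2 μ := by
    intro l i
    have h := MemLp.const_inner (𝕜 := ℝ) (EuclideanSpace.single i (1 : ℝ)) (hX2 l)
    simpa [EuclideanSpace.inner_single_left] using h
  have hXiint : ∀ l (i : Fin p), Integrable (fun ω => X l ω i) μ :=
    fun l i => (hXi2 l i).integrable one_le_two
  have hprod_int : ∀ (l m : Fin N) (i j : Fin p),
      Integrable (fun ω => X l ω i * X m ω j) μ := by
    intro l m i j
    have h := (hXi2 m j).smul (hXi2 l i) (r := 1)
    rw [← memLp_one_iff_integrable]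
    exact h
  -- zero mean
  have hmeanν : ∫ x, s x ∂ν = 0 := by
    rw [hν_def, integral_withDensity_eq_integral_smul hf_meas]
    have : (fun x => f x • s x) = fun x => q x • s x := by
      funext x; rw [NNReal.smul_def, hfq x]
    rw [this]; exact hs_mean
  have hXmean : ∀ l, ∫ ω, X l ω ∂μ = 0 := by
    intro l
    have := integral_map (μ := μ) (hgz_meas l).aemeasurable
      (f := fun x => s x) (by rw [hmap l]; exact hs.aestronglyMeasurable)
    rw [hmap l] at this
    rw [hX_def, ← this, hmeanν]
  have hXimean : ∀ l (i : Fin p), ∫ ω, X l ω i ∂μ = 0 := by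
    intro l i
    have h := (EuclideanSpace.proj (𝕜 := ℝ) i).integral_comp_comm (hXint l)
    simpa [hXmean l] using h
  -- second moments
  have hXii : ∀ (l : Fin N) (i j : Fin p),
      ∫ ω, X l ω i * X l ω j ∂μ = I i j := by
    intro l i j
    have hm : AEStronglyMeasurable (fun x => s x i * s x j) ν :=
      ((hsi_meas i).mul (hsi_meas j)).aestronglyMeasurable
    have h := integral_map (μ := μ) (hgz_meas l).aemeasurable
      (f := fun x => s x i * s x j) (by rw [hmap l]; exact hm)
    rw [hmap l] at h
    rw [hX_def, ← h, hν_def, integral_withDensity_eq_integral_smul hf_meas, hI i j]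
    congr 1; funext x
    rw [NNReal.smul_def, hfq x, smul_eq_mul]; ring
  have hcross : ∀ (l m : Fin N), l ≠ m → ∀ (i j : Fin p),
      ∫ ω, X l ω i * X m ω j ∂μ = 0 := by
    intro l m hlm i j
    have hφ : Measurable (fun v => s (g θstar v) i) :=
      (hsi_meas i).comp hg_meas
    have hψ : Measurable (fun v => s (g θstar v) j) :=
      (hsi_meas j).comp hg_meas
    have hind : IndepFun (fun ω => X l ω i) (fun ω => X m ω j) μ :=
      (hz_indep.indepFun hlm).comp hφ hψ
    have := IndepFun.integral_fun_mul_eq_mul_integral hind (hXi2 l i).aestronglyMeasurable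
      (hXi2 m j).aestronglyMeasurable
    rw [this, hXimean l i, hXimean m j, mul_zero]
  -- components of Gtotal
  have hGti : ∀ ω (i : Fin p), Gtotal ω i = (N : ℝ)⁻¹ * ∑ l, X l ω i := by
    intro ω i
    rw [hGT ω, hGscore ω]
    have h := congrArg (EuclideanSpace.proj (𝕜 := ℝ) i)
      (rfl : ((N : ℝ)⁻¹ • ∑ l : Fin N, s (g θstar (z l ω)))
        = (N : ℝ)⁻¹ • ∑ l : Fin N, s (g θstar (z l ω)))
    calc ((N : ℝ)⁻¹ • ∑ l : Fin N, s (g θstar (z l ω))) i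
        = EuclideanSpace.proj (𝕜 := ℝ) i
            ((N : ℝ)⁻¹ • ∑ l : Fin N, s (g θstar (z l ω))) := rfl
      _ = (N : ℝ)⁻¹ * ∑ l, X l ω i := by
          rw [_root_.map_smul, map_sum]; simp [hX_def, smul_eq_mul]
  -- mean of Gtotal
  have hmean_total : ∫ ω, Gtotal ω ∂μ = 0 := by
    have h : (fun ω => Gtotal ω) = fun ω => (N : ℝ)⁻¹ • ∑ l, X l ω := by
      funext ω; rw [hGT ω, hGscore ω]
    rw [h, integral_smul, integral_finset_sum _ fun l _ => hXint l]
    simp [hXmean]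
  have hmean_i : ∀ i : Fin p, ∫ ω, Gtotal ω i ∂μ = 0 := by
    intro i
    have h : (fun ω => Gtotal ω i) = fun ω => (N : ℝ)⁻¹ * ∑ l, X l ω i := by
      funext ω; exact hGti ω i
    rw [h, integral_const_mul, integral_finset_sum _ fun l _ => hXiint l i]
    simp [hXimean]
  -- the covariance
  have hcov : ∀ i j : Fin p,
      ∫ ω, (Gtotal ω i - (∫ ω', Gtotal ω' i ∂μ)) * (Gtotal ω j - (∫ ω', Gtotal ω' j ∂μ)) ∂μ
        = (N : ℝ)⁻¹ * I i j := by
    intro i j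
    rw [hmean_i i, hmean_i j]
    have h1 : ∀ ω, (Gtotal ω i - 0) * (Gtotal ω j - 0)
        = (N : ℝ)⁻¹ * ((N : ℝ)⁻¹ * ∑ l, ∑ m, X l ω i * X m ω j) := by
      intro ω
      rw [sub_zero, sub_zero, hGti ω i, hGti ω j, ← Finset.sum_mul_sum]
      ring
    calc ∫ ω, (Gtotal ω i - 0) * (Gtotal ω j - 0) ∂μ
        = ∫ ω, (N : ℝ)⁻¹ * ((N : ℝ)⁻¹ * ∑ l, ∑ m, X l ω i * X m ω j) ∂μ := by
          exact integral_congr_ae (Filter.Eventually.of_forall h1)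
      _ = (N : ℝ)⁻¹ * ((N : ℝ)⁻¹ * ∑ l, ∑ m, ∫ ω, X l ω i * X m ω j ∂μ) := by
          rw [integral_const_mul, integral_const_mul,
            integral_finset_sum _ fun l _ =>
              integrable_finset_sum _ fun m _ => hprod_int l m i j]
          congr 1; congr 1
          exact Finset.sum_congr rfl fun l _ =>
            integral_finset_sum _ fun m _ => hprod_int l m i j
      _ = (N : ℝ)⁻¹ * ((N : ℝ)⁻¹ * ∑ l : Fin N, I i j) := by
          congr 2
          refine Finset.sum_congr rfl fun l _ => ?_
          rw [Finset.sum_eq_single l (fun m _ hml => hcross l m (Ne.symm hml) i j)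
            (fun h => absurd (Finset.mem_univ l) h), hXii l i j]
      _ = (N : ℝ)⁻¹ * I i j := by
          rw [Finset.sum_const, Finset.card_univ, Fintype.card_fin]
          field_simp
          rw [nsmul_eq_mul]
  refine ⟨Filter.Eventually.of_forall hGT, hmean_total, hcov, ?_⟩
  intro hI0 hall
  apply hI0
  ext i j
  have h := (hall i j).symm.trans (hcov i j)
  have : I i j = 0 := by
    field_simp at h
    linarith
  simpa using this
end
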